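/- Let W₁,...,W_N be subspaces of ℝ^M with orthogonal projections P₁,...,P_N. The following are equivalent: (a) for all x, y ∈ ℝ^M, ‖P_n x‖ = ‖P_n y‖ for all n implies x = ±y; (b) for every choice of orthonormal bases {φ_{n,d}}_{d=1}^{D_n} of each W_n, the combined family {φ_{n,d}} allows phase retrieval (equivalently, has the complement property) in ℝ^M. -/

import Mathlib

open RealInnerProductSpace

variable {M : ℕ}

private lemma orthonormal_coe {U : Submodule ℝ (EuclideanSpace ℝ (Fin M))} {ι : Type*}
    {v : ι → U} (h : Orthonormal ℝ v) :
    Orthonormal ℝ (fun i => (v i : EuclideanSpace ℝ (Fin M))) := by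
  classical
  rw [orthonormal_iff_ite] at h ⊢
  intro i j
  simpa [Submodule.coe_inner] using h i j

private lemma span_coe_eq {U : Submodule ℝ (EuclideanSpace ℝ (Fin M))} {ι : Type*}
    {v : ι → U} (h : Submodule.span ℝ (Set.range v) = ⊤) :
    Submodule.span ℝ (Set.range (fun i => (v i : EuclideanSpace ℝ (Fin M)))) = U := by
  have := congrArg (Submodule.map U.subtype) h
  rwa [Submodule.map_span, Submodule.map_subtype_top, ← Set.range_comp] at this

private lemma norm_proj_sq (U : Submodule ℝ (EuclideanSpace ℝ (Fin M))) {ι : Type*} [Fintype ι]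
    (b : OrthonormalBasis ι ℝ U) (x : EuclideanSpace ℝ (Fin M)) :
    ‖U.orthogonalProjectionOnto x‖ ^ 2 = ∑ i, ⟪x, (b i : EuclideanSpace ℝ (Fin M))⟫ ^ 2 := by
  have h := b.sum_inner_mul_inner (U.orthogonalProjectionOnto x) (U.orthogonalProjectionOnto x)
  rw [real_inner_self_eq_norm_sq] at h
  rw [← h]
  refine Finset.sum_congr rfl fun i _ => ?_
  rw [Submodule.inner_orthogonalProjectionOnto_eq_of_mem_right, Submodule.inner_orthogonalProjectionOnto_eq_of_mem_left]
  rw [real_inner_comm x]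
  ring

private lemma exists_onb {D : ℕ} (U : Submodule ℝ (EuclideanSpace ℝ (Fin M)))
    (hU : Module.finrank ℝ U = D) (φ : Fin D → EuclideanSpace ℝ (Fin M))
    (hφ : Orthonormal ℝ φ) (hsp : Submodule.span ℝ (Set.range φ) = U) :
    ∃ b : OrthonormalBasis (Fin D) ℝ U, ∀ d, (b d : EuclideanSpace ℝ (Fin M)) = φ d := by
  classical
  have hmem : ∀ d, φ d ∈ U := fun d => hsp ▸ Submodule.subset_span (Set.mem_range_self d)
  set ψ : Fin D → U := fun d => ⟨φ d, hmem d⟩ with hψdef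
  have hψ : Orthonormal ℝ ψ := by
    rw [orthonormal_iff_ite] at hφ ⊢
    intro i j
    simpa [Submodule.coe_inner, hψdef] using hφ i j
  have hspan : ⊤ ≤ Submodule.span ℝ (Set.range ψ) :=
    le_of_eq (hψ.linearIndependent.span_eq_top_of_card_eq_finrank' (by simp [hU])).symm
  exact ⟨OrthonormalBasis.mk hψ hspan, fun d => by rw [OrthonormalBasis.coe_mk]⟩

theorem stmt_5 (M N : ℕ) (W : Fin N → Submodule ℝ (EuclideanSpace ℝ (Fin M)))
    (D : Fin N → ℕ) (hD : ∀ n, Module.finrank ℝ (W n) = D n) :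
    (∀ x y : EuclideanSpace ℝ (Fin M),
        (∀ n, ‖(W n).orthogonalProjectionOnto x‖ = ‖(W n).orthogonalProjectionOnto y‖) →
        x = y ∨ x = -y) ↔
    (∀ φ : (n : Fin N) → Fin (D n) → EuclideanSpace ℝ (Fin M),
        (∀ n, Orthonormal ℝ (φ n) ∧ Submodule.span ℝ (Set.range (φ n)) = W n) →
        ∀ x y : EuclideanSpace ℝ (Fin M),
          (∀ n d, |⟪x, φ n d⟫| = |⟪y, φ n d⟫|) → x = y ∨ x = -y) := by
  constructor
  · intro ha φ hφ x y hinner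
    apply ha
    intro n
    obtain ⟨b, hb⟩ := exists_onb (W n) (hD n) (φ n) (hφ n).1 (hφ n).2
    have hsum : ∑ d, ⟪x, (b d : EuclideanSpace ℝ (Fin M))⟫ ^ 2
        = ∑ d, ⟪y, (b d : EuclideanSpace ℝ (Fin M))⟫ ^ 2 := by
      refine Finset.sum_congr rfl fun d _ => ?_
      rw [hb d, ← sq_abs, hinner n d, sq_abs]
    have h2 : ‖(W n).orthogonalProjectionOnto x‖ ^ 2 = ‖(W n).orthogonalProjectionOnto y‖ ^ 2 := by
      rw [norm_proj_sq (W n) b x, norm_proj_sq (W n) b y, hsum]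
    exact (sq_eq_sq₀ (norm_nonneg _) (norm_nonneg _)).mp h2
  · intro hball x y hnorm
    have key : ∀ n : Fin N, ∃ b : OrthonormalBasis (Fin (D n)) ℝ (W n),
        ∀ d, |⟪x, (b d : EuclideanSpace ℝ (Fin M))⟫|
            = |⟪y, (b d : EuclideanSpace ℝ (Fin M))⟫| := by
      intro n
      set u : EuclideanSpace ℝ (Fin M) :=
        ((W n).orthogonalProjectionOnto x : EuclideanSpace ℝ (Fin M)) with hu
      set v : EuclideanSpace ℝ (Fin M) :=
        ((W n).orthogonalProjectionOnto y : EuclideanSpace ℝ (Fin M)) with hv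
      have hun : ‖u‖ = ‖v‖ := by
        have := hnorm n
        simpa [hu, hv] using this
      have hxu : ∀ e ∈ W n, ⟪x, e⟫ = ⟪u, e⟫ := by
        intro e he
        have := Submodule.starProjection_inner_eq_zero (K := W n) x e he
        rw [Submodule.starProjection_apply, inner_sub_left] at this
        linarith
      have hyv : ∀ e ∈ W n, ⟪y, e⟫ = ⟪v, e⟫ := by
        intro e he
        have := Submodule.starProjection_inner_eq_zero (K := W n) y e he
        rw [Submodule.starProjection_apply, inner_sub_left] at this
        linarith
      -- key identity: ⟪u, u - v⟫ = -⟪v, u - v⟫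
      have hanti : ⟪u, u - v⟫ = -⟪v, u - v⟫ := by
        have h1 : ⟪u, u⟫ = ⟪v, v⟫ := by
          rw [real_inner_self_eq_norm_sq, real_inner_self_eq_norm_sq, hun]
        rw [inner_sub_right, inner_sub_right]
        have := real_inner_comm u v
        linarith
      by_cases hw : u - v = 0
      · -- u = v : any orthonormal basis works
        have huv : u = v := sub_eq_zero.mp hw
        refine ⟨(stdOrthonormalBasis ℝ (W n)).reindex
          (finCongr (hD n)), fun d => ?_⟩
        set e := ((stdOrthonormalBasis ℝ (W n)).reindex
          (finCongr (hD n)) d : EuclideanSpace ℝ (Fin M))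
        have he : e ∈ W n := Submodule.coe_mem _
        rw [hxu e he, hyv e he, huv]
      · -- u ≠ v : build basis containing (u-v)/‖u-v‖
        set w : EuclideanSpace ℝ (Fin M) := u - v with hwdef
        have hwW : w ∈ W n := Submodule.sub_mem _ (Submodule.coe_mem _) (Submodule.coe_mem _)
        have hDn : D n ≠ 0 := by
          intro h0
          have : Module.finrank ℝ (W n) = 0 := by rw [hD n, h0]
          have hbot : W n = ⊥ := Submodule.finrank_eq_zero.mp this
          exact hw (by simpa [hbot] using hwW)
        haveI : NeZero (D n) := ⟨hDn⟩
        set e₀ : W n := ‖w‖⁻¹ • ⟨w, hwW⟩ with he₀def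
        have hwne : ‖w‖ ≠ 0 := norm_ne_zero_iff.mpr hw
        have he₀norm : ‖e₀‖ = 1 := by
          rw [he₀def, norm_smul, norm_inv, norm_norm]
          have : ‖(⟨w, hwW⟩ : W n)‖ = ‖w‖ := rfl
          rw [this, inv_mul_cancel₀ hwne]
        have hcard : Module.finrank ℝ (W n) = Fintype.card (Fin (D n)) := by simp [hD n]
        have hres : Orthonormal ℝ (Set.restrict {(0 : Fin (D n))} (fun _ => e₀)) := by
          constructor
          · intro i; exact he₀norm
          · intro i j hij
            exact absurd (Subsingleton.elim i j) hij
        obtain ⟨b, hb⟩ := hres.exists_orthonormalBasis_extension_of_card_eq hcard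
        have hb0 : b 0 = e₀ := hb 0 rfl
        refine ⟨b, fun d => ?_⟩
        have hbd : (b d : EuclideanSpace ℝ (Fin M)) ∈ W n := Submodule.coe_mem _
        rw [hxu _ hbd, hyv _ hbd]
        by_cases hd : d = 0
        · subst hd
          have hcoe : (b 0 : EuclideanSpace ℝ (Fin M)) = ‖w‖⁻¹ • w := by
            rw [hb0, he₀def]; rfl
          rw [hcoe, real_inner_smul_right, real_inner_smul_right]
          rw [show ⟪u, w⟫ = -⟪v, w⟫ from hanti]
          rw [mul_neg, abs_neg]
        · -- b d ⟂ e₀, hence ⟪u, b d⟫ = ⟪v, b d⟫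
          have horth : ⟪b 0, b d⟫ = 0 := b.orthonormal.2 (Ne.symm hd)
          have horth' : ⟪(b 0 : EuclideanSpace ℝ (Fin M)), (b d : EuclideanSpace ℝ (Fin M))⟫ = 0 :=
            horth
          have hcoe : (b 0 : EuclideanSpace ℝ (Fin M)) = ‖w‖⁻¹ • w := by
            rw [hb0, he₀def]; rfl
          rw [hcoe, real_inner_smul_left] at horth'
          have hw0 : ⟪w, (b d : EuclideanSpace ℝ (Fin M))⟫ = 0 := by
            rcases mul_eq_zero.mp horth' with h | h
            · exact absurd h (inv_ne_zero hwne)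
            · exact h
          have : ⟪u, (b d : EuclideanSpace ℝ (Fin M))⟫ = ⟪v, (b d : EuclideanSpace ℝ (Fin M))⟫ := by
            have := hw0
            rw [hwdef, inner_sub_left] at this
            linarith
          rw [this]
    choose b hbinner using key
    have hspan : ∀ n, Submodule.span ℝ
        (Set.range (fun d => ((b n d : EuclideanSpace ℝ (Fin M))))) = W n := by
      intro n
      apply span_coe_eq
      rw [← (b n).coe_toBasis]
      exact (b n).toBasis.span_eq
    exact hball (fun n d => (b n d : EuclideanSpace ℝ (Fin M)))
      (fun n => ⟨orthonormal_coe (b n).orthonormal, hspan n⟩)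
      x y (fun n d => hbinner n d)
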